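/- arXiv:2110.08984 — 2 statements merged into one kernel-verified Lean document; each statement's English description precedes it below -/
import Mathlib

section
/- Let A be a finite set, π a probability distribution on A, Q : A → ℝ with 0 ≤ Q(a) ≤ H for all a, and α > 0. Define π⁺(a) ∝ π(a)·exp(α Q(a)). Then for any probability distribution p on A: α · ⟨Q, p − π⟩ ≤ KL(p ‖ π) − KL(p ‖ π⁺) + α²H²/2. -/
open Finset

/-- The mgf bound: for 0 ≤ Q ≤ H and α ≥ 0,
log Σ π a exp(α Q a) ≤ α Σ π a Q a + α²H²/2. -/
lemma log_mgf_le_aux {A : Type*} [Fintype A] [Nonempty A] (π Q : A → ℝ) (H α : ℝ)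
    (hπpos : ∀ a, 0 < π a) (hπsum : ∑ a, π a = 1)
    (hQ : ∀ a, 0 ≤ Q a ∧ Q a ≤ H) (hα : 0 ≤ α) :
    Real.log (∑ a, π a * Real.exp (α * Q a)) ≤
      α * (∑ a, π a * Q a) + α ^ 2 * H ^ 2 / 2 := by
  have hH : 0 ≤ H := le_trans (hQ (Classical.arbitrary A)).1 (hQ (Classical.arbitrary A)).2
  set Z : ℝ → ℝ := fun t => ∑ a, π a * Real.exp (t * Q a) with hZ
  set N : ℝ → ℝ := fun t => ∑ a, π a * Q a * Real.exp (t * Q a) with hN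
  set M : ℝ → ℝ := fun t => ∑ a, π a * Q a ^ 2 * Real.exp (t * Q a) with hM
  have hZpos : ∀ t, 0 < Z t := fun t =>
    Finset.sum_pos (fun a _ => mul_pos (hπpos a) (Real.exp_pos _)) Finset.univ_nonempty
  have hZder : ∀ t, HasDerivAt Z (N t) t := by
    intro t
    have : HasDerivAt (fun t => ∑ a, π a * Real.exp (t * Q a))
        (∑ a, π a * (Real.exp (t * Q a) * Q a)) t := by
      apply HasDerivAt.fun_sum
      intro a _
      exact (((hasDerivAt_mul_const (Q a)).exp)).const_mul (π a)
    convert this using 1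
    simp only [hN]
    apply Finset.sum_congr rfl
    intro a _; ring
  have hNder : ∀ t, HasDerivAt N (M t) t := by
    intro t
    have : HasDerivAt (fun t => ∑ a, π a * Q a * Real.exp (t * Q a))
        (∑ a, π a * Q a * (Real.exp (t * Q a) * Q a)) t := by
      apply HasDerivAt.fun_sum
      intro a _
      exact (((hasDerivAt_mul_const (Q a)).exp)).const_mul (π a * Q a)
    convert this using 1
    simp only [hM]
    apply Finset.sum_congr rfl
    intro a _; ring
  set EQ : ℝ := ∑ a, π a * Q a with hEQ
  set h : ℝ → ℝ := fun t => N t / Z t - EQ - t * H ^ 2 with hh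
  set g : ℝ → ℝ := fun t => Real.log (Z t) - t * EQ - t ^ 2 * H ^ 2 / 2 with hg
  have hgder : ∀ t, HasDerivAt g (h t) t := by
    intro t
    have h1 : HasDerivAt (fun t => Real.log (Z t)) (N t / Z t) t :=
      (hZder t).log (ne_of_gt (hZpos t))
    have h2 : HasDerivAt (fun t : ℝ => t * EQ) EQ t := hasDerivAt_mul_const EQ
    have h3 : HasDerivAt (fun t : ℝ => t ^ 2 * H ^ 2 / 2) (t * H ^ 2) t := by
      have : HasDerivAt (fun t : ℝ => t ^ 2 * H ^ 2 / 2) (2 * t ^ 1 * H ^ 2 / 2) t := by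
        exact (((hasDerivAt_pow 2 t)).mul_const (H ^ 2)).div_const 2
      convert this using 1; ring
    have := (h1.sub h2).sub h3
    exact this
  have hhder : ∀ t, HasDerivAt h ((M t * Z t - N t * N t) / (Z t) ^ 2 - H ^ 2) t := by
    intro t
    have h1 : HasDerivAt (fun t => N t / Z t)
        ((M t * Z t - N t * N t) / (Z t) ^ 2) t :=
      (hNder t).div (hZder t) (ne_of_gt (hZpos t))
    have h3 : HasDerivAt (fun t : ℝ => t * H ^ 2) (H ^ 2) t := hasDerivAt_mul_const (H ^ 2)
    have := (h1.sub_const EQ).sub h3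
    exact this
  have hM_le : ∀ t, M t ≤ H ^ 2 * Z t := by
    intro t
    rw [hM, hZ, Finset.mul_sum]
    apply Finset.sum_le_sum
    intro a _
    have h1 : Q a ^ 2 ≤ H ^ 2 := by nlinarith [(hQ a).1, (hQ a).2]
    calc π a * Q a ^ 2 * Real.exp (t * Q a)
        = Q a ^ 2 * (π a * Real.exp (t * Q a)) := by ring
      _ ≤ H ^ 2 * (π a * Real.exp (t * Q a)) :=
          mul_le_mul_of_nonneg_right h1 (mul_pos (hπpos a) (Real.exp_pos _)).le
  have hhanti : Antitone h := by
    apply antitone_of_deriv_nonpos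
    · intro t; exact (hhder t).differentiableAt
    · intro t
      rw [(hhder t).deriv]
      have hZt := hZpos t
      have hMle := hM_le t
      have : (M t * Z t - N t * N t) / Z t ^ 2 ≤ H ^ 2 := by
        rw [div_le_iff₀ (by positivity)]
        nlinarith [sq_nonneg (N t)]
      linarith
  have hZ0 : Z 0 = 1 := by
    rw [hZ]; simp [hπsum]
  have hN0 : N 0 = EQ := by
    rw [hN, hEQ]; simp
  have hh0 : h 0 = 0 := by
    rw [hh]; simp [hN0, hZ0]
  have hganti : AntitoneOn g (Set.Ici 0) := by
    apply antitoneOn_of_deriv_nonpos (convex_Ici 0)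
    · exact fun t _ => ((hgder t).differentiableAt).continuousAt.continuousWithinAt
    · exact fun t _ => ((hgder t).differentiableAt).differentiableWithinAt
    · intro t ht
      rw [(hgder t).deriv]
      have : h t ≤ h 0 := hhanti (le_of_lt (by simpa using ht))
      rw [hh0] at this
      exact this
  have hg0 : g 0 = 0 := by
    rw [hg]; simp [hZ0]
  have := hganti (Set.self_mem_Ici) (Set.mem_Ici.mpr hα) hα
  rw [hg0] at this
  rw [hg] at this
  simp only at this
  linarith

/-- One-step mirror descent lemma: for the exponentiated-gradient update
π⁺(a) ∝ π(a)·exp(α Q(a)), for any distribution p on A,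
α⟨Q, p − π⟩ ≤ KL(p‖π) − KL(p‖π⁺) + α²H²/2. -/
theorem stmt_3 {A : Type*} [Fintype A] [Nonempty A] (π Q : A → ℝ) (H α : ℝ)
    (hπpos : ∀ a, 0 < π a) (hπsum : ∑ a, π a = 1)
    (hQ : ∀ a, 0 ≤ Q a ∧ Q a ≤ H) (hα : 0 < α)
    (πp : A → ℝ)
    (hπp : ∀ a, πp a = π a * Real.exp (α * Q a) / ∑ a', π a' * Real.exp (α * Q a'))
    (p : A → ℝ) (hp : ∀ a, 0 ≤ p a) (hpsum : ∑ a, p a = 1) :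
    α * ∑ a, Q a * (p a - π a) ≤
      (∑ a, p a * Real.log (p a / π a)) - (∑ a, p a * Real.log (p a / πp a))
        + α ^ 2 * H ^ 2 / 2 := by
  set Zc : ℝ := ∑ a', π a' * Real.exp (α * Q a') with hZc
  have hZpos : 0 < Zc :=
    Finset.sum_pos (fun a _ => mul_pos (hπpos a) (Real.exp_pos _)) Finset.univ_nonempty
  -- termwise identity
  have key : ∀ a, p a * Real.log (p a / π a) - p a * Real.log (p a / πp a)
      = p a * (α * Q a - Real.log Zc) := by
    intro a
    rcases eq_or_lt_of_le (hp a) with h0 | hpa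
    · rw [← h0]; simp
    · have hπa := hπpos a
      have hπpa : πp a = π a * Real.exp (α * Q a) / Zc := hπp a
      have hπppos : 0 < πp a := by
        rw [hπpa]; positivity
      have hlog : Real.log (πp a) = Real.log (π a) + α * Q a - Real.log Zc := by
        rw [hπpa, Real.log_div (by positivity) (ne_of_gt hZpos),
          Real.log_mul (ne_of_gt hπa) (ne_of_gt (Real.exp_pos _)), Real.log_exp]
      rw [Real.log_div (ne_of_gt hpa) (ne_of_gt hπa),
        Real.log_div (ne_of_gt hpa) (ne_of_gt hπppos), hlog]
      ring
  have hsumkey : (∑ a, p a * Real.log (p a / π a)) - (∑ a, p a * Real.log (p a / πp a))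
      = α * (∑ a, p a * Q a) - Real.log Zc := by
    rw [← Finset.sum_sub_distrib]
    rw [Finset.sum_congr rfl (fun a _ => key a)]
    have : ∑ a, p a * (α * Q a - Real.log Zc)
        = α * (∑ a, p a * Q a) - (∑ a, p a) * Real.log Zc := by
      rw [Finset.mul_sum, Finset.sum_mul, ← Finset.sum_sub_distrib]
      apply Finset.sum_congr rfl
      intro a _; ring
    rw [this, hpsum, one_mul]
  rw [hsumkey]
  have hL := log_mgf_le_aux π Q H α hπpos hπsum hQ hα.le
  have h1 : α * ∑ a, Q a * (p a - π a)
      = α * (∑ a, p a * Q a) - α * (∑ a, π a * Q a) := by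
    rw [Finset.mul_sum, Finset.mul_sum, Finset.mul_sum, ← Finset.sum_sub_distrib]
    apply Finset.sum_congr rfl
    intro a _; ring
  rw [h1]
  linarith
end

section
/- Let {φₜ}ₜ≥1 be a sequence in ℝᵈ with ‖φₜ‖₂ ≤ 1, let Λ₀ be a positive-definite d×d matrix with smallest eigenvalue at least 1, and define Λₜ = Λ₀ + Σ_{j=1}^{t−1} φⱼφⱼᵀ. Then for all t: log(det(Λ_{t+1})/det(Λ₁)) ≤ Σ_{j=1}^{t} φⱼᵀ Λⱼ⁻¹ φⱼ ≤ 2 log(det(Λ_{t+1})/det(Λ₁)). -/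
open Matrix

lemma vmv_psd {d : ℕ} (v : Fin d → ℝ) : (Matrix.vecMulVec v v).PosSemidef := by
  have h : Matrix.vecMulVec v v = (Matrix.replicateCol Unit v) * (Matrix.replicateCol Unit v)ᴴ := by
    rw [Matrix.vecMulVec_eq Unit, Matrix.conjTranspose_replicateCol]
    simp
  rw [h]
  exact Matrix.posSemidef_self_mul_conjTranspose _

lemma psd_sum {d : ℕ} (s : Finset ℕ) (f : ℕ → Fin d → ℝ) :
    (∑ j ∈ s, Matrix.vecMulVec (f j) (f j)).PosSemidef := by
  classical
  induction s using Finset.induction with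
  | empty => simpa using Matrix.PosSemidef.zero
  | insert _ _ hj ih =>
    rw [Finset.sum_insert hj]
    exact (vmv_psd _).add ih

lemma det_step {d : ℕ} {A : Matrix (Fin d) (Fin d) ℝ} (hA : A.PosDef) (v : Fin d → ℝ) :
    (A + Matrix.vecMulVec v v).det = A.det * (1 + v ⬝ᵥ A⁻¹ *ᵥ v) := by
  rw [Matrix.vecMulVec_eq Unit, Matrix.det_add_replicateCol_mul_replicateRow hA.det_pos.ne'.isUnit]
  congr 1
  rw [Matrix.det_unique]
  simp [Matrix.mul_apply, Matrix.replicateRow, Matrix.replicateCol, dotProduct, Matrix.mulVec,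
    Finset.mul_sum, Finset.sum_mul]
  rw [Finset.sum_comm]
  exact Finset.sum_congr rfl fun i _ => Finset.sum_congr rfl fun j _ => by ring

/-- Elliptical potential lemma: log-determinant sandwich bounds for the sum of
self-normalized quadratic forms. -/
theorem stmt_8 (d : ℕ) (φ : ℕ → (Fin d → ℝ)) (hφ : ∀ t, φ t ⬝ᵥ φ t ≤ 1)
    (Λ₀ : Matrix (Fin d) (Fin d) ℝ) (hΛ₀ : Λ₀.PosDef)
    (hmin : (Λ₀ - 1).PosSemidef)
    (Λ : ℕ → Matrix (Fin d) (Fin d) ℝ)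
    (hΛ : ∀ t, Λ t = Λ₀ + ∑ j ∈ Finset.Icc 1 (t - 1), Matrix.vecMulVec (φ j) (φ j)) :
    ∀ t : ℕ,
      Real.log ((Λ (t + 1)).det / (Λ 1).det)
        ≤ ∑ j ∈ Finset.Icc 1 t, φ j ⬝ᵥ (Λ j)⁻¹ *ᵥ φ j ∧
      ∑ j ∈ Finset.Icc 1 t, φ j ⬝ᵥ (Λ j)⁻¹ *ᵥ φ j
        ≤ 2 * Real.log ((Λ (t + 1)).det / (Λ 1).det) := by
  set x : ℕ → ℝ := fun t => φ t ⬝ᵥ (Λ t)⁻¹ *ᵥ φ t with hx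
  have hpos : ∀ t, (Λ t).PosDef := by
    intro t
    rw [hΛ t]
    exact hΛ₀.add_posSemidef (psd_sum _ _)
  have hstep : ∀ t : ℕ, Λ (t + 2) = Λ (t + 1) + Matrix.vecMulVec (φ (t + 1)) (φ (t + 1)) := by
    intro t
    rw [hΛ (t + 2), hΛ (t + 1)]
    have h1 : t + 2 - 1 = t + 1 := by omega
    have h2 : t + 1 - 1 = t := by omega
    rw [h1, h2, Finset.sum_Icc_succ_top (by omega : 1 ≤ t + 1), add_assoc]
  have hxnn : ∀ t, 0 ≤ x t := by
    intro t
    have := ((hpos t).inv.posSemidef).dotProduct_mulVec_nonneg (φ t)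
    simpa using this
  have hx1 : ∀ t, x t ≤ 1 := by
    intro t
    have hM := hpos t
    set y : Fin d → ℝ := (Λ t)⁻¹ *ᵥ φ t with hy
    have hMy : Λ t *ᵥ y = φ t := by
      rw [hy, Matrix.mulVec_mulVec, Matrix.mul_nonsing_inv _ hM.det_pos.ne'.isUnit,
        Matrix.one_mulVec]
    have hpsd : (Λ t - 1).PosSemidef := by
      have : Λ t - 1 = (Λ₀ - 1) + ∑ j ∈ Finset.Icc 1 (t - 1), Matrix.vecMulVec (φ j) (φ j) := by
        rw [hΛ t]; abel
      rw [this]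
      exact hmin.add (psd_sum _ _)
    have hge : y ⬝ᵥ y ≤ x t := by
      have h0 := hpsd.dotProduct_mulVec_nonneg y
      have hsub : (Λ t - 1) *ᵥ y = Λ t *ᵥ y - y := by
        rw [Matrix.sub_mulVec, Matrix.one_mulVec]
      rw [hsub, hMy] at h0
      simp only [dotProduct_sub, star_trivial] at h0
      have hc : y ⬝ᵥ φ t = x t := by rw [dotProduct_comm]
      rw [hc] at h0
      linarith
    have hcs := Finset.sum_mul_sq_le_sq_mul_sq Finset.univ (φ t) y
    have hxeq : x t = φ t ⬝ᵥ y := rfl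
    have hyy : (0:ℝ) ≤ y ⬝ᵥ y := by
      simpa [dotProduct] using Finset.sum_nonneg fun i _ => mul_self_nonneg (y i)
    have hpp : φ t ⬝ᵥ φ t = ∑ i, φ t i ^ 2 := by
      simp [dotProduct, sq]
    have hyy2 : y ⬝ᵥ y = ∑ i, y i ^ 2 := by
      simp [dotProduct, sq]
    have hdot : φ t ⬝ᵥ y = ∑ i, φ t i * y i := rfl
    have hφt := hφ t
    nlinarith [hcs, hge, hyy, hφt, hxnn t]
  have hdetpos : ∀ t, 0 < (Λ t).det := fun t => (hpos t).det_pos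
  have hprod : ∀ t : ℕ, Real.log ((Λ (t + 1)).det / (Λ 1).det)
      = ∑ j ∈ Finset.Icc 1 t, Real.log (1 + x j) := by
    intro t
    induction t with
    | zero => simp [div_self (hdetpos 1).ne']
    | succ n ih =>
      rw [Finset.sum_Icc_succ_top (by omega : 1 ≤ n + 1), ← ih, hstep n,
        det_step (hpos (n + 1)) (φ (n + 1))]
      have h1 : (0:ℝ) < 1 + x (n + 1) := by linarith [hxnn (n + 1)]
      have heq : (Λ (n + 1)).det * (1 + x (n + 1)) / (Λ 1).det
          = ((Λ (n + 1)).det / (Λ 1).det) * (1 + x (n + 1)) := by ring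
      rw [heq, Real.log_mul (div_pos (hdetpos _) (hdetpos 1)).ne' h1.ne']
  intro t
  rw [hprod t]
  constructor
  · refine Finset.sum_le_sum fun j _ => ?_
    have h1 : (0:ℝ) < 1 + x j := by linarith [hxnn j]
    have := Real.log_le_sub_one_of_pos h1
    linarith
  · rw [Finset.mul_sum]
    refine Finset.sum_le_sum fun j _ => ?_
    have h1 : (0:ℝ) < 1 + x j := by linarith [hxnn j]
    have h2 := Real.log_le_sub_one_of_pos (inv_pos.mpr h1)
    rw [Real.log_inv] at h2
    have hinv : (1 + x j) * (1 + x j)⁻¹ = 1 := mul_inv_cancel₀ h1.ne'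
    nlinarith [hxnn j, hx1 j, h2, hinv, h1]
end
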